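/- arXiv:2308.14054 — 2 statements merged into one kernel-verified Lean document; each statement's English description precedes it below -/
import Mathlib

section
/- Let G = (V,E) be a finite simple graph and a ∈ V. Then there exist complex numbers c_+ and c_− of modulus 1 such that P_{Y,±}^{(a)} |G⟩ = (c_±/√2) |Y,±⟩^{(a)} ⊗ U_{a,Y,±} |τ_a(G) − a⟩, where U_{a,Y,+} = ⨂_{b∈N_a} √(−iZ)^{(b)}, U_{a,Y,−} = ⨂_{b∈N_a} √(+iZ)^{(b)}, and |τ_a(G) − a⟩ is the graph state of the graph obtained from G by local complementation at a followed by deletion of a. -/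
open scoped BigOperators

noncomputable section

/-- The state space of a collection of qubits indexed by `V`:
amplitudes on computational-basis configurations `V → Bool`. -/
abbrev QState (V : Type*) := (V → Bool) → ℂ

variable {V : Type*}

/-- The inner product `⟨ψ|φ⟩`. -/
def qInner [Fintype V] [DecidableEq V] (ψ φ : QState V) : ℂ :=
  ∑ x, starRingEnd ℂ (ψ x) * φ x

/-- Pauli `X` acting on qubit `a`. -/
def pauliX [DecidableEq V] (a : V) (ψ : QState V) : QState V :=
  fun x => ψ (Function.update x a (!x a))

/-- Pauli `Z` acting on qubit `a`. -/
def pauliZ (a : V) (ψ : QState V) : QState V :=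
  fun x => (if x a then (-1 : ℂ) else 1) * ψ x

/-- Pauli `Y` acting on qubit `a`. -/
def pauliY [DecidableEq V] (a : V) (ψ : QState V) : QState V :=
  fun x => (if x a then Complex.I else -Complex.I) * ψ (Function.update x a (!x a))

/-- The tensor product `⨂_{b ∈ s} Z^{(b)}` of Pauli `Z` over the qubits in `s`. -/
def pauliZProd (s : Finset V) (ψ : QState V) : QState V :=
  fun x => (∏ b ∈ s, if x b then (-1 : ℂ) else 1) * ψ x

/-- A tensor product over the qubits in `s` of the diagonal single-qubit gate
`diag (f false, f true)`. -/
def diagProd (s : Finset V) (f : Bool → ℂ) (ψ : QState V) : QState V :=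
  fun x => (∏ b ∈ s, f (x b)) * ψ x

/-- The sign `(-1)^{x u · x v}` contributed by an edge `{u, v}`. -/
def edgeSign (x : V → Bool) : Sym2 V → ℂ :=
  Sym2.lift ⟨fun a b => if x a && x b then (-1 : ℂ) else 1,
    fun a b => by simp [Bool.and_comm]⟩

/-- The graph state `|G⟩ = (∏_{{u,v}∈E} CZ^{(uv)}) ⨂_v |+⟩^{(v)}` of a finite simple graph,
written out in amplitudes. -/
def graphState [Fintype V] [DecidableEq V] (G : SimpleGraph V) [DecidableRel G.Adj] :
    QState V :=
  fun x => ((Real.sqrt 2 : ℝ) : ℂ)⁻¹ ^ (Fintype.card V) * ∏ e ∈ G.edgeFinset, edgeSign x e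

/-- Local complementation `τ_a(G)` of a graph `G` at the vertex `a`: complement the
adjacency among the neighbors of `a`, leaving all other adjacencies unchanged. -/
def localComp (G : SimpleGraph V) (a : V) : SimpleGraph V where
  Adj u v :=
    (G.Adj a u ∧ G.Adj a v ∧ u ≠ v ∧ ¬ G.Adj u v) ∨
      ((¬ (G.Adj a u ∧ G.Adj a v)) ∧ G.Adj u v)
  symm := by
    constructor
    intro u v h
    rcases h with ⟨h1, h2, h3, h4⟩ | ⟨h1, h2⟩
    · exact Or.inl ⟨h2, h1, h3.symm, fun h => h4 (G.adj_symm h)⟩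
    · exact Or.inr ⟨fun h => h1 ⟨h.2, h.1⟩, G.adj_symm h2⟩
  loopless := by
    constructor
    intro u h
    rcases h with ⟨_, _, h3, _⟩ | ⟨_, h2⟩
    · exact h3 rfl
    · exact G.irrefl h2

instance [DecidableEq V] (G : SimpleGraph V) [DecidableRel G.Adj] (a : V) :
    DecidableRel (localComp G a).Adj := fun u v =>
  inferInstanceAs (Decidable
    ((G.Adj a u ∧ G.Adj a v ∧ u ≠ v ∧ ¬ G.Adj u v) ∨
      ((¬ (G.Adj a u ∧ G.Adj a v)) ∧ G.Adj u v)))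

/-- The induced subgraph of `G` on the vertices satisfying `P`. -/
def inducedSub (G : SimpleGraph V) (P : V → Prop) : SimpleGraph {v : V // P v} :=
  SimpleGraph.comap Subtype.val G

instance (G : SimpleGraph V) [DecidableRel G.Adj] (P : V → Prop) :
    DecidableRel (inducedSub G P).Adj := fun u v =>
  inferInstanceAs (Decidable (G.Adj u.1 v.1))

/-- The eigenvectors `|Z,+⟩ = |0⟩`, `|Z,-⟩ = |1⟩` of Pauli `Z`
(`s = false` the `+1`-eigenvector, `s = true` the `-1`-eigenvector). -/
def zVec (s : Bool) : Bool → ℂ := fun c => if c = s then 1 else 0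

/-- The eigenvectors `|X,±⟩ = (|0⟩ ± |1⟩)/√2` of Pauli `X`
(`s = false` the `+1`-eigenvector, `s = true` the `-1`-eigenvector). -/
def xVec (s : Bool) : Bool → ℂ :=
  fun c => ((Real.sqrt 2 : ℝ) : ℂ)⁻¹ * (if c && s then -1 else 1)

/-- The eigenvectors `|Y,±⟩ = (|0⟩ ± i|1⟩)/√2` of Pauli `Y`
(`s = false` the `+1`-eigenvector, `s = true` the `-1`-eigenvector). -/
def yVec (s : Bool) : Bool → ℂ :=
  fun c => ((Real.sqrt 2 : ℝ) : ℂ)⁻¹ *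
    (if c then (if s then -Complex.I else Complex.I) else 1)

/-- The rank-one projector `|v⟩⟨v|` on qubit `a` (identity elsewhere),
for a single-qubit vector `v`. -/
def projDir [DecidableEq V] (a : V) (v : Bool → ℂ) (ψ : QState V) : QState V :=
  fun x => v (x a) *
    (starRingEnd ℂ (v false) * ψ (Function.update x a false) +
      starRingEnd ℂ (v true) * ψ (Function.update x a true))

/-- The tensor product `|v⟩^{(a)} ⊗ |φ⟩` of a single-qubit state on qubit `a` with a state
on the remaining qubits. -/
def tensorQubit [DecidableEq V] (a : V) (v : Bool → ℂ) (φ : QState {u : V // u ≠ a}) :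
    QState V :=
  fun x => v (x a) * φ (fun u => x u.1)

/-- Apply a single-qubit gate with matrix entries `m r c = ⟨r|M|c⟩` on qubit `a`. -/
def applyGate [DecidableEq V] (a : V) (m : Bool → Bool → ℂ) (ψ : QState V) : QState V :=
  fun x => m (x a) false * ψ (Function.update x a false) +
    m (x a) true * ψ (Function.update x a true)

/-- The square roots `√(±iY) = (I ± iY)/√2`
(`s = false` for `√(+iY)`, `s = true` for `√(-iY)`). -/
def sqrtiY (s : Bool) : Bool → Bool → ℂ :=
  fun r c => ((Real.sqrt 2 : ℝ) : ℂ)⁻¹ *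
    (if s then (if r = false ∧ c = true then -1 else 1)
     else (if r = true ∧ c = false then -1 else 1))

/-- The Hadamard gate. -/
def hadamard : Bool → Bool → ℂ :=
  fun r c => ((Real.sqrt 2 : ℝ) : ℂ)⁻¹ * (if r && c then -1 else 1)

/-- Apply a tensor product of single-qubit gates, one on each qubit. -/
def applyLocal [Fintype V] [DecidableEq V] (u : V → Bool → Bool → ℂ) (ψ : QState V) :
    QState V :=
  fun x => ∑ y : V → Bool, (∏ v, u v (x v) (y v)) * ψ y

/-- `2×2` matrix multiplication (matrices as `Bool → Bool → ℂ`). -/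
def matMul2 (a b : Bool → Bool → ℂ) : Bool → Bool → ℂ :=
  fun r c => ∑ k : Bool, a r k * b k c

/-- Adjoint of a `2×2` matrix. -/
def matAdj2 (a : Bool → Bool → ℂ) : Bool → Bool → ℂ := fun r c => starRingEnd ℂ (a c r)

def idMat : Bool → Bool → ℂ := fun r c => if r = c then 1 else 0
def xMat : Bool → Bool → ℂ := fun r c => if r = c then 0 else 1
def yMat : Bool → Bool → ℂ := fun r c => if r = c then 0 else if r then Complex.I else -Complex.I
def zMat : Bool → Bool → ℂ := fun r c => if r = c then (if r then -1 else 1) else 0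

/-- A `2×2` matrix is unitary. -/
def IsUnitary2 (u : Bool → Bool → ℂ) : Prop := matMul2 (matAdj2 u) u = idMat

/-- A single-qubit Clifford unitary: a unitary conjugating `X` and `Z` into
`i^k·P` with `P` a Pauli matrix. -/
def IsClifford1 (u : Bool → Bool → ℂ) : Prop :=
  IsUnitary2 u ∧
    (∃ (k : ℕ) (P : Bool → Bool → ℂ), P ∈ ({idMat, xMat, yMat, zMat} : Set _) ∧
      matMul2 (matMul2 u xMat) (matAdj2 u) = Complex.I ^ k • P) ∧
    (∃ (k : ℕ) (P : Bool → Bool → ℂ), P ∈ ({idMat, xMat, yMat, zMat} : Set _) ∧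
      matMul2 (matMul2 u zMat) (matAdj2 u) = Complex.I ^ k • P)

/-- The action of the `n`-qubit Pauli operator `c · ⨂_v X^{xv v} Z^{zv v}`. -/
def pauliAction [Fintype V] (c : ℂ) (xv zv : V → Bool) (ψ : QState V) : QState V :=
  fun s => c * (∏ v, if zv v && (xor (s v) (xv v)) then (-1 : ℂ) else 1) *
    ψ (fun v => xor (s v) (xv v))

/-- The outer product `|ψ⟩⟨φ|` as a matrix on configurations. -/
def outer (ψ φ : QState V) : (V → Bool) → (V → Bool) → ℂ :=
  fun x y => ψ x * starRingEnd ℂ (φ y)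

open Classical in
/-- Partial trace keeping the qubits that satisfy `P` (tracing out the others). -/
def ptraceKeep [Fintype V] [DecidableEq V] (P : V → Prop)
    (ρ : (V → Bool) → (V → Bool) → ℂ) :
    ({v : V // P v} → Bool) → ({v : V // P v} → Bool) → ℂ :=
  fun x y => ∑ z : {v : V // ¬ P v} → Bool,
    ρ (fun w => if h : P w then x ⟨w, h⟩ else z ⟨w, h⟩)
      (fun w => if h : P w then y ⟨w, h⟩ else z ⟨w, h⟩)

open Classical in
/-- Apply a product of single-qubit bras `⟨bra v|` to each qubit `v` satisfying `P`,
leaving a state on the remaining qubits. -/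
def applyBras [Fintype V] [DecidableEq V] (P : V → Prop) (bra : V → Bool → ℂ)
    (ψ : QState V) : QState {v : V // ¬ P v} :=
  fun x => ∑ z : {v : V // P v} → Bool,
    (∏ v : {v : V // P v}, bra v.1 (z v)) *
      ψ (fun w => if h : P w then z ⟨w, h⟩ else x ⟨w, h⟩)

/-- A density operator: hermitian, trace one, positive semidefinite. -/
def IsDensityOp {α : Type*} [Fintype α] [DecidableEq α]
    (ρ : (α → Bool) → (α → Bool) → ℂ) : Prop :=
  (∀ x y, starRingEnd ℂ (ρ y x) = ρ x y) ∧ (∑ x, ρ x x = 1) ∧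
    ∀ ψ : (α → Bool) → ℂ, ∃ r : ℝ, 0 ≤ r ∧
      (∑ x, ∑ y, starRingEnd ℂ (ψ x) * ρ x y * ψ y) = (r : ℂ)

open Classical in
/-- Separability of an operator on the qubits indexed by `α` with respect to the
bipartition `(A, Aᶜ)`: a finite convex combination of tensor products of density
operators. -/
def SeparableWrt {α : Type*} [Fintype α] [DecidableEq α] (A : Set α)
    (ρ : (α → Bool) → (α → Bool) → ℂ) : Prop :=
  ∃ (k : ℕ) (p : Fin k → ℝ)
    (σ : Fin k → ({a : α // a ∈ A} → Bool) → ({a : α // a ∈ A} → Bool) → ℂ)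
    (τ : Fin k → ({a : α // a ∉ A} → Bool) → ({a : α // a ∉ A} → Bool) → ℂ),
    (∀ i, 0 ≤ p i) ∧ (∑ i, p i = 1) ∧
    (∀ i, IsDensityOp (σ i)) ∧ (∀ i, IsDensityOp (τ i)) ∧
    ∀ x y, ρ x y = ∑ i, (p i : ℂ) *
      (σ i (fun a => x a.1) (fun a => y a.1) * τ i (fun a => x a.1) (fun a => y a.1))


instance {α : Type*} [DecidableEq α] (r : α → α → Prop) [DecidableRel r] :
    DecidableRel (SimpleGraph.fromRel r).Adj := fun a b =>
  inferInstanceAs (Decidable (a ≠ b ∧ (r a b ∨ r b a)))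

/-- The line graph on `{1, …, n}` (as `Fin n`) with edges between consecutive vertices. -/
def lineGraph (n : ℕ) : SimpleGraph (Fin n) :=
  SimpleGraph.fromRel (fun i j => (i : ℕ) + 1 = (j : ℕ))

instance (n : ℕ) : DecidableRel (lineGraph n).Adj := fun a b =>
  inferInstanceAs (Decidable (a ≠ b ∧ ((a : ℕ) + 1 = (b : ℕ) ∨ (b : ℕ) + 1 = (a : ℕ))))

/-- The extension `I_R ⊗ s` of an operator `s` on `n` qubits by the identity on an extra
reference qubit labelled `0`. -/
def liftOp {n : ℕ} (s : QState (Fin n) → QState (Fin n)) (ψ : QState (Fin (n + 1))) :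
    QState (Fin (n + 1)) :=
  fun x => s (fun y => ψ (Fin.cons (x 0) y)) (fun k => x k.succ)

end


set_option linter.unusedSectionVars false
set_option linter.unusedVariables false
noncomputable section AuxStmt3

open Finset

variable {V : Type*} [Fintype V] [DecidableEq V]

/-- abbreviation for `1/√2` as a complex number -/
def rc : ℂ := ((Real.sqrt 2 : ℝ) : ℂ)⁻¹

lemma edgeSign_mk (x : V → Bool) (u v : V) :
    edgeSign x s(u,v) = if x u && x v then -1 else 1 := rfl

lemma edgeSign_sq (x : V → Bool) (e : Sym2 V) : edgeSign x e * edgeSign x e = 1 := by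
  induction e using Sym2.ind with
  | _ u v => rw [edgeSign_mk]; split <;> norm_num

lemma prod_ite_neg_one {α : Type*} (s : Finset α) (p : α → Prop) [DecidablePred p] :
    (∏ e ∈ s, if p e then (-1:ℂ) else 1) = (-1) ^ (s.filter p).card := by
  rw [Finset.prod_ite, Finset.prod_const, Finset.prod_const_one, mul_one]

lemma prod_ite_two {α : Type*} (s : Finset α) (p : α → Prop) [DecidablePred p] (c d : ℂ) :
    (∏ e ∈ s, if p e then c else d)
      = c ^ (s.filter p).card * d ^ (s.filter fun e => ¬ p e).card := by
  rw [Finset.prod_ite, Finset.prod_const, Finset.prod_const]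

lemma scalar_key (k : ℕ) :
    ((-1:ℂ)) ^ (k.choose 2) * (1 - Complex.I * (-1)^k) = (1 - Complex.I) * Complex.I ^ k ∧
    ((-1:ℂ)) ^ (k.choose 2) * (1 + Complex.I * (-1)^k) = (1 + Complex.I) * (-Complex.I) ^ k := by
  induction k with
  | zero => norm_num
  | succ k ih =>
    obtain ⟨ih1, ih2⟩ := ih
    have hc : (k+1).choose 2 = k.choose 2 + k := by
      rw [Nat.choose_succ_succ]; norm_num [Nat.choose_one_right, Nat.add_comm]
    have hI : Complex.I ^ 2 = -1 := Complex.I_sq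
    set c : ℂ := (-1:ℂ)^(k.choose 2) with hcdef
    set e : ℂ := (-1:ℂ)^k with hedef
    have h1 : e * e = 1 := by
      rw [hedef, ← pow_add, ← two_mul, pow_mul]; norm_num
    constructor
    · rw [hc, pow_add, pow_succ, pow_succ]
      linear_combination Complex.I * ih1 + c * Complex.I * h1 + c * e * hI
    · rw [hc, pow_add, pow_succ, pow_succ]
      linear_combination (-Complex.I) * ih2 + (-(c * Complex.I)) * h1 + c * e * hI

lemma pow_split (u u' : ℂ) (h : u * u' = 1) (k d : ℕ) (hk : k ≤ d) :
    u ^ d * u' ^ (d - k) = u ^ k := by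
  have h1 : u ^ d = u ^ k * u ^ (d - k) := by rw [← pow_add]; congr 1; omega
  rw [h1, mul_assoc, ← mul_pow, h, one_pow, mul_one]

/-- predicate: both endpoints of the edge are `true` -/
def bothTrue (x : V → Bool) : Sym2 V → Bool :=
  Sym2.lift ⟨fun a b => x a && x b, fun a b => Bool.and_comm _ _⟩

lemma bothTrue_mk (x : V → Bool) (u v : V) : bothTrue x s(u,v) = (x u && x v) := rfl

lemma edgeSign_eq_ite (x : V → Bool) (e : Sym2 V) :
    edgeSign x e = if bothTrue x e = true then -1 else 1 := by
  induction e using Sym2.ind with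
  | _ u v => rfl

lemma edgeSign_update_of_not_mem (x : V → Bool) (a : V) (c : Bool) (e : Sym2 V)
    (h : a ∉ e) :
    edgeSign (Function.update x a c) e = edgeSign x e := by
  induction e using Sym2.ind with
  | _ u v =>
    simp only [Sym2.mem_iff, not_or] at h
    rw [edgeSign_mk, edgeSign_mk, Function.update_of_ne (Ne.symm h.1),
      Function.update_of_ne (Ne.symm h.2)]

lemma card_sym2_nondiag (t : Finset V) :
    (t.sym2.filter (fun e => ¬ e.IsDiag)).card = t.card.choose 2 := by
  classical
  induction t using Finset.induction_on with
  | empty => simp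
  | @insert a t ha ih =>
    have himg : (((insert a t).image fun b => s(a, b)).filter (fun e => ¬ e.IsDiag))
        = t.image (fun b => s(a,b)) := by
      rw [Finset.image_insert, Finset.filter_insert, if_neg (by simp)]
      refine Finset.filter_true_of_mem ?_
      intro e he
      obtain ⟨b, hb, rfl⟩ := Finset.mem_image.mp he
      simp only [Sym2.mk_isDiag_iff]
      rintro rfl
      exact ha hb
    have hdisj : Disjoint (((insert a t).image fun b => s(a, b)).filter (fun e => ¬ e.IsDiag))
        (t.sym2.filter (fun e => ¬ e.IsDiag)) := by
      rw [Finset.disjoint_left]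
      intro e h1 h2
      obtain ⟨b, _, rfl⟩ := Finset.mem_image.mp (Finset.mem_filter.mp h1).1
      have := Finset.mem_sym2_iff.mp (Finset.mem_filter.mp h2).1 a (Sym2.mem_mk_left a b)
      exact ha this
    rw [Finset.sym2_insert, Finset.filter_union, Finset.card_union_of_disjoint hdisj, himg,
      Finset.card_image_of_injective _ (fun b c h => Sym2.congr_right.mp h), ih,
      Finset.card_insert_of_notMem ha, Nat.choose_succ_succ]
    norm_num [Nat.choose_one_right, Nat.add_comm]

lemma prod_sym2_nondiag (x : V → Bool) (s : Finset V) :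
    ∏ e ∈ s.sym2.filter (fun e => ¬ e.IsDiag), edgeSign x e
      = (-1:ℂ) ^ ((s.filter (fun b => x b = true)).card.choose 2) := by
  classical
  rw [Finset.prod_congr rfl (fun e _ => edgeSign_eq_ite x e), prod_ite_neg_one]
  congr 1
  have hset : (s.sym2.filter (fun e => ¬ e.IsDiag)).filter (fun e => bothTrue x e = true)
      = (s.filter (fun b => x b = true)).sym2.filter (fun e => ¬ e.IsDiag) := by
    ext e
    induction e using Sym2.ind with
    | _ u v =>
      simp only [Finset.mem_filter, Finset.mk_mem_sym2_iff, Sym2.mk_isDiag_iff,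
        bothTrue_mk, Bool.and_eq_true]
      tauto
  rw [hset, card_sym2_nondiag]

lemma prod_edges_split (G : SimpleGraph V) [DecidableRel G.Adj] (a : V) (y : V → Bool) :
    ∏ e ∈ G.edgeFinset, edgeSign y e =
      (∏ b ∈ G.neighborFinset a, (if y a && y b then (-1:ℂ) else 1)) *
        ∏ e ∈ G.edgeFinset.filter (fun e => a ∉ e), edgeSign y e := by
  classical
  rw [← Finset.prod_filter_mul_prod_filter_not G.edgeFinset (fun e => a ∈ e)]
  congr 1
  have himg : G.edgeFinset.filter (fun e => a ∈ e)
      = (G.neighborFinset a).image (fun b => s(a,b)) := by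
    ext e
    simp only [Finset.mem_filter, SimpleGraph.mem_edgeFinset, Finset.mem_image,
      SimpleGraph.mem_neighborFinset]
    constructor
    · rintro ⟨he, hae⟩
      refine ⟨Sym2.Mem.other' hae, ?_, Sym2.other_spec' hae⟩
      rw [← SimpleGraph.mem_edgeSet, Sym2.other_spec' hae]
      exact he
    · rintro ⟨b, hb, rfl⟩
      exact ⟨hb, Sym2.mem_mk_left a b⟩
  rw [himg, Finset.prod_image (by intro b _ c _ h; exact Sym2.congr_right.mp h)]
  rfl

lemma localComp_adj (G : SimpleGraph V) (a u v : V) :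
    (localComp G a).Adj u v ↔
      ((G.Adj a u ∧ G.Adj a v ∧ u ≠ v ∧ ¬ G.Adj u v) ∨
        ((¬ (G.Adj a u ∧ G.Adj a v)) ∧ G.Adj u v)) := Iff.rfl

lemma prod_H_eq (G : SimpleGraph V) [DecidableRel G.Adj] (a : V) (x : V → Bool) :
    (∏ e ∈ (inducedSub (localComp G a) (· ≠ a)).edgeFinset,
        edgeSign (fun u : {v : V // v ≠ a} => x u.1) e) *
      (∏ e ∈ G.edgeFinset.filter (fun e => a ∉ e), edgeSign x e) =
    (-1:ℂ) ^ (((G.neighborFinset a).filter (fun b => x b = true)).card.choose 2) := by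
  classical
  have hinj : Function.Injective (Sym2.map (Subtype.val : {v : V // v ≠ a} → V)) :=
    Sym2.map.injective Subtype.val_injective
  set A : Finset (Sym2 V) :=
    (inducedSub (localComp G a) (· ≠ a)).edgeFinset.image (Sym2.map Subtype.val) with hA
  have h1 : ∏ e ∈ (inducedSub (localComp G a) (· ≠ a)).edgeFinset,
      edgeSign (fun u : {v : V // v ≠ a} => x u.1) e = ∏ e ∈ A, edgeSign x e := by
    rw [hA, Finset.prod_image (fun e _ e' _ h => hinj h)]
    refine Finset.prod_congr rfl fun e _ => ?_
    induction e using Sym2.ind with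
    | _ u v => rfl
  rw [h1]
  have hmemA : ∀ u v : V, s(u,v) ∈ A ↔ (u ≠ a ∧ v ≠ a ∧ (localComp G a).Adj u v) := by
    intro u v
    simp only [hA, Finset.mem_image, SimpleGraph.mem_edgeFinset]
    constructor
    · rintro ⟨e', he', heq⟩
      induction e' using Sym2.ind with
      | _ p q =>
        rw [Sym2.map_pair_eq, Sym2.eq_iff] at heq
        have hadj : (localComp G a).Adj p.1 q.1 := he'
        rcases heq with ⟨hpu, hqv⟩ | ⟨hpv, hqu⟩
        · exact ⟨hpu ▸ p.2, hqv ▸ q.2, hpu ▸ hqv ▸ hadj⟩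
        · exact ⟨hqu ▸ q.2, hpv ▸ p.2, hqu ▸ hpv ▸ hadj.symm⟩
    · rintro ⟨hu, hv, hadj⟩
      exact ⟨s(⟨u,hu⟩,⟨v,hv⟩), hadj, rfl⟩
  have hmemB : ∀ u v : V, s(u,v) ∈ G.edgeFinset.filter (fun e => a ∉ e) ↔
      (u ≠ a ∧ v ≠ a ∧ G.Adj u v) := by
    intro u v
    simp only [Finset.mem_filter, SimpleGraph.mem_edgeFinset, SimpleGraph.mem_edgeSet,
      Sym2.mem_iff, not_or]
    constructor
    · rintro ⟨h1, h2, h3⟩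
      exact ⟨Ne.symm h2, Ne.symm h3, h1⟩
    · rintro ⟨h1, h2, h3⟩
      exact ⟨h3, Ne.symm h1, Ne.symm h2⟩
  set B := G.edgeFinset.filter (fun e => a ∉ e) with hB
  set Q : Sym2 V → Prop := fun e => ∀ w ∈ e, G.Adj a w with hQ
  have hQuv : ∀ u v : V, Q s(u,v) ↔ (G.Adj a u ∧ G.Adj a v) := by
    intro u v
    simp [hQ, Sym2.mem_iff]
  have hunion : A.filter Q ∪ B.filter Q
      = (G.neighborFinset a).sym2.filter (fun e => ¬ e.IsDiag) := by
    ext e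
    induction e using Sym2.ind with
    | _ u v =>
      simp only [Finset.mem_union, Finset.mem_filter, hmemA u v, hmemB u v, hQuv u v,
        Finset.mk_mem_sym2_iff, SimpleGraph.mem_neighborFinset, Sym2.mk_isDiag_iff]
      constructor
      · rintro (⟨⟨hu, hv, hadj⟩, hau, hav⟩ | ⟨⟨hu, hv, hadj⟩, hau, hav⟩)
        · exact ⟨⟨hau, hav⟩, hadj.ne⟩
        · exact ⟨⟨hau, hav⟩, hadj.ne⟩
      · rintro ⟨⟨hau, hav⟩, hne⟩
        by_cases hGuv : G.Adj u v
        · exact Or.inr ⟨⟨hau.ne', hav.ne', hGuv⟩, hau, hav⟩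
        · exact Or.inl ⟨⟨hau.ne', hav.ne',
            Or.inl ⟨hau, hav, hne, hGuv⟩⟩, hau, hav⟩
  have hdisj : Disjoint (A.filter Q) (B.filter Q) := by
    rw [Finset.disjoint_left]
    intro e h1 h2
    induction e using Sym2.ind with
    | _ u v =>
      rw [Finset.mem_filter, hmemA u v, hQuv u v] at h1
      rw [Finset.mem_filter, hmemB u v] at h2
      rcases (localComp_adj G a u v).mp h1.1.2.2 with ⟨_, _, _, h4⟩ | ⟨h4, _⟩
      · exact h4 h2.1.2.2
      · exact h4 h1.2
  have hnq : A.filter (fun e => ¬ Q e) = B.filter (fun e => ¬ Q e) := by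
    ext e
    induction e using Sym2.ind with
    | _ u v =>
      simp only [Finset.mem_filter, hmemA u v, hmemB u v, hQuv u v]
      constructor
      · rintro ⟨⟨hu, hv, hadj⟩, hq⟩
        rcases (localComp_adj G a u v).mp hadj with ⟨h1, h2, _, _⟩ | ⟨_, h4⟩
        · exact absurd ⟨h1, h2⟩ hq
        · exact ⟨⟨hu, hv, h4⟩, hq⟩
      · rintro ⟨⟨hu, hv, hadj⟩, hq⟩
        exact ⟨⟨hu, hv, (localComp_adj G a u v).mpr (Or.inr ⟨hq, hadj⟩)⟩, hq⟩
  calc (∏ e ∈ A, edgeSign x e) * ∏ e ∈ B, edgeSign x e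
      = ((∏ e ∈ A.filter Q, edgeSign x e) * ∏ e ∈ A.filter (fun e => ¬ Q e), edgeSign x e) *
        ((∏ e ∈ B.filter Q, edgeSign x e) * ∏ e ∈ B.filter (fun e => ¬ Q e), edgeSign x e) := by
        rw [Finset.prod_filter_mul_prod_filter_not, Finset.prod_filter_mul_prod_filter_not]
    _ = ((∏ e ∈ A.filter Q, edgeSign x e) * ∏ e ∈ B.filter Q, edgeSign x e) *
        ((∏ e ∈ B.filter (fun e => ¬ Q e), edgeSign x e) *
          ∏ e ∈ B.filter (fun e => ¬ Q e), edgeSign x e) := by rw [hnq]; ring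
    _ = (∏ e ∈ (G.neighborFinset a).sym2.filter (fun e => ¬ e.IsDiag), edgeSign x e) * 1 := by
        rw [← Finset.prod_union hdisj, hunion, ← Finset.prod_mul_distrib,
          Finset.prod_eq_one (fun e _ => edgeSign_sq x e)]
    _ = (-1:ℂ) ^ (((G.neighborFinset a).filter (fun b => x b = true)).card.choose 2) := by
        rw [mul_one, prod_sym2_nondiag]


lemma core (G : SimpleGraph V) [DecidableRel G.Adj] (a : V) (s : Bool) (f : Bool → ℂ) (c : ℂ)
    (hf : ∀ k, k ≤ (G.neighborFinset a).card →
      rc * rc * (1 + (if s then Complex.I else -Complex.I) * (-1:ℂ)^k)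
        = c * rc * (f true)^k * (f false)^((G.neighborFinset a).card - k)
            * (-1:ℂ)^(k.choose 2)) :
    projDir a (yVec s) (graphState G) =
      (c * rc) • tensorQubit a (yVec s)
        (diagProd (Finset.univ.filter (fun b : {v : V // v ≠ a} => G.Adj a b.1)) f
          (graphState (inducedSub (localComp G a) (· ≠ a)))) := by
  classical
  funext x
  set n := Fintype.card V with hn
  set d := (G.neighborFinset a).card with hd
  set k := ((G.neighborFinset a).filter (fun b => x b = true)).card with hk
  set FB := ∏ e ∈ G.edgeFinset.filter (fun e => a ∉ e), edgeSign x e with hFB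
  have hbne : ∀ b ∈ G.neighborFinset a, b ≠ a :=
    fun b hb => ((SimpleGraph.mem_neighborFinset _ _ _).mp hb).ne'
  have hBprod : ∀ cb : Bool,
      ∏ e ∈ G.edgeFinset.filter (fun e => a ∉ e), edgeSign (Function.update x a cb) e
        = FB := by
    intro cb
    refine Finset.prod_congr rfl fun e he => ?_
    exact edgeSign_update_of_not_mem x a cb e (Finset.mem_filter.mp he).2
  have hψ0 : graphState G (Function.update x a false) = rc ^ n * FB := by
    have h0 : graphState G (Function.update x a false)
        = rc ^ n * ∏ e ∈ G.edgeFinset, edgeSign (Function.update x a false) e := rfl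
    rw [h0, prod_edges_split G a, hBprod]
    have : ∀ b ∈ G.neighborFinset a,
        (if Function.update x a false a && Function.update x a false b then (-1:ℂ) else 1)
          = 1 := by
      intro b hb
      rw [Function.update_self]
      simp
    rw [Finset.prod_congr rfl this, Finset.prod_const_one, one_mul]
  have hψ1 : graphState G (Function.update x a true) = rc ^ n * ((-1:ℂ)^k * FB) := by
    have h0 : graphState G (Function.update x a true)
        = rc ^ n * ∏ e ∈ G.edgeFinset, edgeSign (Function.update x a true) e := rfl
    rw [h0, prod_edges_split G a, hBprod]
    have h1 : ∀ b ∈ G.neighborFinset a,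
        (if Function.update x a true a && Function.update x a true b then (-1:ℂ) else 1)
          = if x b = true then (-1:ℂ) else 1 := by
      intro b hb
      rw [Function.update_self, Function.update_of_ne (hbne b hb)]
      simp
    rw [Finset.prod_congr rfl h1, prod_ite_neg_one]
  have hLconj0 : (starRingEnd ℂ) (yVec s false) = rc := by
    simp [yVec, rc, map_inv₀, Complex.conj_ofReal]
  have hLconj1 : (starRingEnd ℂ) (yVec s true)
      = rc * (if s then Complex.I else -Complex.I) := by
    cases s <;> simp [yVec, rc, map_inv₀, Complex.conj_ofReal]
  have hL : projDir a (yVec s) (graphState G) x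
      = yVec s (x a) * ((starRingEnd ℂ) (yVec s false)
          * graphState G (Function.update x a false)
        + (starRingEnd ℂ) (yVec s true) * graphState G (Function.update x a true)) := rfl
  have hsq : FB * FB = 1 := by
    rw [hFB, ← Finset.prod_mul_distrib]
    exact Finset.prod_eq_one fun e _ => edgeSign_sq x e
  have hHE : ∏ e ∈ (inducedSub (localComp G a) (· ≠ a)).edgeFinset,
      edgeSign (fun u : {v : V // v ≠ a} => x u.1) e = (-1:ℂ)^(k.choose 2) * FB := by
    have h := prod_H_eq G a x
    rw [← hFB, ← hk] at h
    calc ∏ e ∈ (inducedSub (localComp G a) (· ≠ a)).edgeFinset,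
          edgeSign (fun u : {v : V // v ≠ a} => x u.1) e
        = (∏ e ∈ (inducedSub (localComp G a) (· ≠ a)).edgeFinset,
            edgeSign (fun u : {v : V // v ≠ a} => x u.1) e) * (FB * FB) := by
          rw [hsq, mul_one]
      _ = ((∏ e ∈ (inducedSub (localComp G a) (· ≠ a)).edgeFinset,
            edgeSign (fun u : {v : V // v ≠ a} => x u.1) e) * FB) * FB := by ring
      _ = (-1:ℂ)^(k.choose 2) * FB := by rw [h]
  have hcard : Fintype.card {v : V // v ≠ a} = n - 1 := by
    have h1 : Fintype.card {v : V // v = a} = 1 := Fintype.card_subtype_eq a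
    have h2 := Fintype.card_subtype_compl (fun v : V => v = a)
    rw [h1] at h2
    exact h2
  have hgH : graphState (inducedSub (localComp G a) (· ≠ a))
        (fun u : {v : V // v ≠ a} => x u.1)
      = rc ^ (n-1) * ((-1:ℂ)^(k.choose 2) * FB) := by
    have h0 : graphState (inducedSub (localComp G a) (· ≠ a))
          (fun u : {v : V // v ≠ a} => x u.1)
        = rc ^ (Fintype.card {v : V // v ≠ a}) *
            ∏ e ∈ (inducedSub (localComp G a) (· ≠ a)).edgeFinset,
              edgeSign (fun u : {v : V // v ≠ a} => x u.1) e := rfl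
    rw [h0, hHE, hcard]
  have hprodf : ∏ b ∈ Finset.univ.filter (fun b : {v : V // v ≠ a} => G.Adj a b.1),
      f (x b.1) = (f true)^k * (f false)^(d-k) := by
    have hS2 : ∏ b ∈ Finset.univ.filter (fun b : {v : V // v ≠ a} => G.Adj a b.1),
        f (x b.1) = ∏ b ∈ G.neighborFinset a, f (x b) := by
      refine Finset.prod_bij (fun (b : {v : V // v ≠ a}) _ => b.1) ?_ ?_ ?_ ?_
      · intro b hb
        exact (SimpleGraph.mem_neighborFinset _ _ _).mpr (Finset.mem_filter.mp hb).2
      · intro b _ b' _ h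
        exact Subtype.val_injective h
      · intro b hb
        exact ⟨⟨b, hbne b hb⟩, Finset.mem_filter.mpr
          ⟨Finset.mem_univ _, (SimpleGraph.mem_neighborFinset _ _ _).mp hb⟩, rfl⟩
      · intro b _
        rfl
    have hval : ∀ b ∈ G.neighborFinset a,
        f (x b) = if x b = true then f true else f false := by
      intro b _
      cases hxb : x b <;> simp [hxb]
    rw [hS2, Finset.prod_congr rfl hval, prod_ite_two, ← hk]
    congr 2
    have h3 := Finset.card_filter_add_card_filter_not
      (s := G.neighborFinset a) (p := fun b => x b = true)
    omega
  have hR : ((c * rc) • tensorQubit a (yVec s)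
      (diagProd (Finset.univ.filter (fun b : {v : V // v ≠ a} => G.Adj a b.1)) f
        (graphState (inducedSub (localComp G a) (· ≠ a))))) x
      = (c * rc) * (yVec s (x a) *
          ((∏ b ∈ Finset.univ.filter (fun b : {v : V // v ≠ a} => G.Adj a b.1),
            f (x b.1)) *
            graphState (inducedSub (localComp G a) (· ≠ a))
              (fun u : {v : V // v ≠ a} => x u.1))) := rfl
  rw [hL, hψ0, hψ1, hLconj0, hLconj1, hR, hprodf, hgH]
  have hkd : k ≤ d := Finset.card_filter_le _ _
  have key := hf k hkd
  have hnpos : 1 ≤ n := by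
    rw [hn]
    exact Fintype.card_pos_iff.mpr ⟨a⟩
  have hpow : rc ^ n = rc^(n-1) * rc := by
    rw [← pow_succ]
    congr 1
    omega
  rw [hpow]
  linear_combination (yVec s (x a) * rc^(n-1) * FB) * key

end AuxStmt3

/-- Projecting qubit `a` of a graph state onto the Pauli-`Y` eigenbasis:
up to a phase, `P_{Y,±}^{(a)} |G⟩ = (1/√2) |Y,±⟩^{(a)} ⊗ U_{a,Y,±} |τ_a(G) − a⟩`, where
`U_{a,Y,+} = ⨂_{b∈N_a} √(−iZ)^{(b)}`, `U_{a,Y,−} = ⨂_{b∈N_a} √(+iZ)^{(b)}` and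
`√(±iZ) = diag(e^{±iπ/4}, e^{∓iπ/4})`. -/
theorem stmt3 {V : Type*} [Fintype V] [DecidableEq V]
    (G : SimpleGraph V) [DecidableRel G.Adj] (a : V) :
    ∃ cp cm : ℂ, ‖cp‖ = 1 ∧ ‖cm‖ = 1 ∧
      projDir a (yVec false) (graphState G) =
        (cp * ((Real.sqrt 2 : ℝ) : ℂ)⁻¹) •
          tensorQubit a (yVec false)
            (diagProd (Finset.univ.filter (fun b : {v : V // v ≠ a} => G.Adj a b.1))
              (fun c => if c then Complex.exp (Complex.I * (Real.pi : ℂ) / 4)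
                else Complex.exp (-(Complex.I * (Real.pi : ℂ) / 4)))
              (graphState (inducedSub (localComp G a) (· ≠ a)))) ∧
      projDir a (yVec true) (graphState G) =
        (cm * ((Real.sqrt 2 : ℝ) : ℂ)⁻¹) •
          tensorQubit a (yVec true)
            (diagProd (Finset.univ.filter (fun b : {v : V // v ≠ a} => G.Adj a b.1))
              (fun c => if c then Complex.exp (-(Complex.I * (Real.pi : ℂ) / 4))
                else Complex.exp (Complex.I * (Real.pi : ℂ) / 4))
              (graphState (inducedSub (localComp G a) (· ≠ a)))) := by
  classical
  have hsqrt : (Real.sqrt 2 : ℝ) * Real.sqrt 2 = 2 := Real.mul_self_sqrt (by norm_num)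
  have h2c : ((Real.sqrt 2 : ℝ) : ℂ) * ((Real.sqrt 2 : ℝ) : ℂ) = 2 := by exact_mod_cast hsqrt
  have hrne : ((Real.sqrt 2 : ℝ) : ℂ) ≠ 0 := by
    simp only [ne_eq, Complex.ofReal_eq_zero]
    exact (Real.sqrt_pos.mpr (by norm_num)).ne'
  have hrc2 : rc * rc = (2:ℂ)⁻¹ := by
    rw [show rc = ((Real.sqrt 2 : ℝ) : ℂ)⁻¹ from rfl, ← mul_inv, h2c]
  set ω := Complex.exp (Complex.I * (Real.pi:ℂ) / 4) with hω0
  set ω' := Complex.exp (-(Complex.I * (Real.pi:ℂ) / 4)) with hω'0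
  have hr2 : ((Real.sqrt 2 / 2 : ℝ) : ℂ) = rc := by
    rw [show rc = ((Real.sqrt 2 : ℝ) : ℂ)⁻¹ from rfl, Complex.ofReal_div]
    field_simp
    push_cast
    linear_combination h2c
  have harg : Complex.I * (Real.pi:ℂ) / 4 = ((Real.pi/4 : ℝ) : ℂ) * Complex.I := by
    push_cast; ring
  have harg' : -(Complex.I * (Real.pi:ℂ) / 4) = ((-(Real.pi/4) : ℝ) : ℂ) * Complex.I := by
    push_cast; ring
  have hω : ω = rc * (1 + Complex.I) := by
    rw [hω0, harg, Complex.exp_mul_I, ← Complex.ofReal_cos, ← Complex.ofReal_sin,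
      Real.cos_pi_div_four, Real.sin_pi_div_four, hr2]
    ring
  have hω' : ω' = rc * (1 - Complex.I) := by
    rw [hω'0, harg', Complex.exp_mul_I, ← Complex.ofReal_cos, ← Complex.ofReal_sin,
      Real.cos_neg, Real.sin_neg, Real.cos_pi_div_four, Real.sin_pi_div_four,
      Complex.ofReal_neg, hr2]
    ring
  have hωω' : ω * ω' = 1 := by
    rw [hω0, hω'0, ← Complex.exp_add, add_neg_cancel, Complex.exp_zero]
  have hωsq : ω * ω = Complex.I := by
    rw [hω]; linear_combination 2*Complex.I*hrc2 + rc*rc*Complex.I_sq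
  have hω'sq : ω' * ω' = -Complex.I := by
    rw [hω']; linear_combination (-2*Complex.I)*hrc2 + rc*rc*Complex.I_sq
  have habsω : ‖ω‖ = 1 := by
    rw [hω0, harg, Complex.norm_exp]
    simp [Complex.mul_re]
  have habsω' : ‖ω'‖ = 1 := by
    rw [hω'0, harg', Complex.norm_exp]
    simp [Complex.mul_re]
  set d := (G.neighborFinset a).card with hd
  refine ⟨ω^d * ω', ω'^d * ω, ?_, ?_, ?_, ?_⟩
  · rw [norm_mul, norm_pow, habsω, habsω', one_pow, mul_one]
  · rw [norm_mul, norm_pow, habsω, habsω', one_pow, one_mul]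
  · refine core G a false _ _ ?_
    intro k hk
    have key := (scalar_key k).1
    have hCC : ((-1:ℂ))^(k.choose 2) * (-1)^(k.choose 2) = 1 := by
      rw [← pow_add, ← two_mul, pow_mul]; norm_num
    have hsplit := pow_split ω ω' hωω' k d hk
    have hkk : ω^k * ω^k = Complex.I^k := by rw [← mul_pow, hωsq]
    show rc * rc * (1 + -Complex.I * (-1:ℂ)^k)
        = (ω^d * ω') * rc * ω^k * ω'^(d-k) * (-1:ℂ)^(k.choose 2)
    symm
    calc (ω^d * ω') * rc * ω^k * ω'^(d-k) * (-1:ℂ)^(k.choose 2)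
        = (ω^d * ω'^(d-k)) * (ω' * rc * ω^k * (-1:ℂ)^(k.choose 2)) := by ring
      _ = ω^k * (ω' * rc * ω^k * (-1:ℂ)^(k.choose 2)) := by rw [hsplit]
      _ = (ω^k * ω^k) * (ω' * rc * (-1:ℂ)^(k.choose 2)) := by ring
      _ = Complex.I^k * ((rc*(1-Complex.I)) * rc * (-1:ℂ)^(k.choose 2)) := by rw [hkk, hω']
      _ = rc * rc * (1 + -Complex.I * (-1:ℂ)^k) := by
          linear_combination (-(rc*rc*(-1:ℂ)^(k.choose 2)))*key
            + (rc*rc*(1 - Complex.I*(-1:ℂ)^k))*hCC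
  · refine core G a true _ _ ?_
    intro k hk
    have key := (scalar_key k).2
    have hCC : ((-1:ℂ))^(k.choose 2) * (-1)^(k.choose 2) = 1 := by
      rw [← pow_add, ← two_mul, pow_mul]; norm_num
    have hω'ω : ω' * ω = 1 := by rw [mul_comm]; exact hωω'
    have hsplit := pow_split ω' ω hω'ω k d hk
    have hkk : ω'^k * ω'^k = (-Complex.I)^k := by rw [← mul_pow, hω'sq]
    show rc * rc * (1 + Complex.I * (-1:ℂ)^k)
        = (ω'^d * ω) * rc * ω'^k * ω^(d-k) * (-1:ℂ)^(k.choose 2)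
    symm
    calc (ω'^d * ω) * rc * ω'^k * ω^(d-k) * (-1:ℂ)^(k.choose 2)
        = (ω'^d * ω^(d-k)) * (ω * rc * ω'^k * (-1:ℂ)^(k.choose 2)) := by ring
      _ = ω'^k * (ω * rc * ω'^k * (-1:ℂ)^(k.choose 2)) := by rw [hsplit]
      _ = (ω'^k * ω'^k) * (ω * rc * (-1:ℂ)^(k.choose 2)) := by ring
      _ = (-Complex.I)^k * ((rc*(1+Complex.I)) * rc * (-1:ℂ)^(k.choose 2)) := by rw [hkk, hω]
      _ = rc * rc * (1 + Complex.I * (-1:ℂ)^k) := by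
          linear_combination (-(rc*rc*(-1:ℂ)^(k.choose 2)))*key
            + (rc*rc*(1 + Complex.I*(-1:ℂ)^k))*hCC
end

section
/- Let G = (V,E) be a finite simple graph and a ∈ V. Then the partial trace of the graph-state projector over qubit a satisfies Tr_a ( |G⟩⟨G| ) = ½ |G−a⟩⟨G−a| + ½ U |G−a⟩⟨G−a| U†, where U = ⨂_{b∈N_a} Z^{(b)} and |G−a⟩ is the graph state of the vertex-deleted graph G−a on the qubits V∖{a}. -/
open scoped BigOperators

noncomputable section Stmt10Aux

variable {V : Type*} [Fintype V] [DecidableEq V]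

private lemma card_ne' (a : V) : Fintype.card V = Fintype.card {v : V // v ≠ a} + 1 := by
  rw [Fintype.card_subtype, Finset.filter_ne', Finset.card_erase_of_mem (Finset.mem_univ a),
    Finset.card_univ, Nat.sub_add_cancel]
  exact Fintype.card_pos_iff.mpr ⟨a⟩

private lemma edgeProd_split (G : SimpleGraph V) [DecidableRel G.Adj] (a : V) (w : V → Bool) :
    ∏ e ∈ G.edgeFinset, edgeSign w e =
      (∏ b ∈ Finset.univ.filter (fun b : {v : V // v ≠ a} => G.Adj a b.1),
        if w a && w b.1 then (-1 : ℂ) else 1) *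
      ∏ e ∈ (inducedSub G (· ≠ a)).edgeFinset, edgeSign (fun u => w u.1) e := by
  classical
  rw [← Finset.prod_filter_mul_prod_filter_not G.edgeFinset (a ∈ ·)]
  congr 1
  · refine (Finset.prod_bij (fun b _ => s(a, b.1)) ?_ ?_ ?_ ?_).symm
    · intro b hb
      simp only [Finset.mem_filter, Finset.mem_univ, true_and] at hb
      simp [SimpleGraph.mem_edgeFinset, hb]
    · intro b₁ h₁ b₂ h₂ h
      exact Subtype.ext (Sym2.congr_right.mp h)
    · intro e he
      simp only [Finset.mem_filter, SimpleGraph.mem_edgeFinset] at he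
      obtain ⟨he, hae⟩ := he
      induction e using Sym2.ind with
      | _ u v =>
        rw [SimpleGraph.mem_edgeSet] at he
        rcases Sym2.mem_iff.mp hae with h | h
        · subst h
          exact ⟨⟨v, he.ne'⟩, by simp [he], rfl⟩
        · subst h
          exact ⟨⟨u, he.symm.ne'⟩, by simp [he.symm], Sym2.eq_swap⟩
    · intro b hb; rfl
  · refine (Finset.prod_bij (fun e _ => Sym2.map Subtype.val e) ?_ ?_ ?_ ?_).symm
    · intro e he
      induction e using Sym2.ind with
      | _ u v =>
        simp only [SimpleGraph.mem_edgeFinset, SimpleGraph.mem_edgeSet] at he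
        simp only [Sym2.map_pair_eq, Finset.mem_filter, SimpleGraph.mem_edgeFinset,
          SimpleGraph.mem_edgeSet, Sym2.mem_iff]
        refine ⟨he, ?_⟩
        push_neg
        exact ⟨fun h => absurd h.symm u.2, fun h => absurd h.symm v.2⟩
    · intro e₁ h₁ e₂ h₂ h
      exact Sym2.map.injective Subtype.val_injective h
    · intro e he
      simp only [Finset.mem_filter, SimpleGraph.mem_edgeFinset] at he
      obtain ⟨he, hae⟩ := he
      induction e using Sym2.ind with
      | _ u v =>
        rw [SimpleGraph.mem_edgeSet] at he
        rw [Sym2.mem_iff] at hae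
        push_neg at hae
        refine ⟨s(⟨u, fun h => hae.1 h.symm⟩, ⟨v, fun h => hae.2 h.symm⟩), ?_, ?_⟩
        · rw [SimpleGraph.mem_edgeFinset, SimpleGraph.mem_edgeSet]
          exact he
        · show Sym2.map Subtype.val s(_, _) = s(u, v)
          rw [Sym2.map_pair_eq]
    · intro e he
      induction e using Sym2.ind with
      | _ u v =>
        show edgeSign (fun u => w u.1) s(u, v) = edgeSign w (Sym2.map Subtype.val s(u, v))
        rw [Sym2.map_pair_eq]
        rfl

private def eqv (a : V) : ({v : V // ¬ v ≠ a} → Bool) ≃ Bool where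
  toFun z := z ⟨a, fun h => h rfl⟩
  invFun b _ := b
  left_inv z := funext fun v => by
    obtain ⟨v, hv⟩ := v
    obtain rfl : v = a := not_not.mp hv
    rfl
  right_inv b := rfl

private def mg (a : V) (t : {v : V // v ≠ a} → Bool) (b : Bool) : V → Bool :=
  fun w => if h : w = a then b else t ⟨w, h⟩

private lemma mg_self (a : V) (t : {v : V // v ≠ a} → Bool) (b : Bool) :
    mg a t b a = b := dif_pos rfl

private lemma mg_ne (a : V) (t : {v : V // v ≠ a} → Bool) (b : Bool) (u : {v : V // v ≠ a}) :
    mg a t b u.1 = t u := dif_neg u.2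

private lemma graphState_mg (G : SimpleGraph V) [DecidableRel G.Adj] (a : V)
    (t : {v : V // v ≠ a} → Bool) (b : Bool) :
    graphState G (mg a t b) =
      (((Real.sqrt 2 : ℝ) : ℂ))⁻¹ ^ (Fintype.card {v : V // v ≠ a} + 1) *
      ((∏ c ∈ Finset.univ.filter (fun c : {v : V // v ≠ a} => G.Adj a c.1),
          if b && t c then (-1 : ℂ) else 1) *
        ∏ e ∈ (inducedSub G (· ≠ a)).edgeFinset, edgeSign t e) := by
  have h3 : (∏ c ∈ Finset.univ.filter (fun c : {v : V // v ≠ a} => G.Adj a c.1),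
      if mg a t b a && mg a t b c.1 then (-1 : ℂ) else 1) =
      ∏ c ∈ Finset.univ.filter (fun c : {v : V // v ≠ a} => G.Adj a c.1),
        if b && t c then (-1 : ℂ) else 1 :=
    Finset.prod_congr rfl fun c _ => by rw [mg_self, mg_ne]
  have h2 : (fun u : {v : V // v ≠ a} => mg a t b u.1) = t := funext fun u => mg_ne a t b u
  simp only [graphState]
  rw [card_ne' a, edgeProd_split G a (mg a t b), h3, h2]

end Stmt10Aux

/-- Tracing out qubit `a` of a graph state:
`Tr_a(|G⟩⟨G|) = ½ |G−a⟩⟨G−a| + ½ U |G−a⟩⟨G−a| U†` with `U = ⨂_{b∈N_a} Z^{(b)}`. -/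
theorem stmt10 {V : Type*} [Fintype V] [DecidableEq V]
    (G : SimpleGraph V) [DecidableRel G.Adj] (a : V) :
    ptraceKeep (· ≠ a) (outer (graphState G) (graphState G)) =
      (2 : ℂ)⁻¹ • outer (graphState (inducedSub G (· ≠ a)))
          (graphState (inducedSub G (· ≠ a))) +
        (2 : ℂ)⁻¹ • outer
          (pauliZProd (Finset.univ.filter (fun b : {v : V // v ≠ a} => G.Adj a b.1))
            (graphState (inducedSub G (· ≠ a))))
          (pauliZProd (Finset.univ.filter (fun b : {v : V // v ≠ a} => G.Adj a b.1))
            (graphState (inducedSub G (· ≠ a)))) := by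
  
  classical
  funext x y
  have hr2 : (((Real.sqrt 2 : ℝ) : ℂ))⁻¹ * (((Real.sqrt 2 : ℝ) : ℂ))⁻¹ = 2⁻¹ := by
    have h : ((Real.sqrt 2 : ℝ) : ℂ) * ((Real.sqrt 2 : ℝ) : ℂ) = 2 := by
      norm_cast
      rw [Real.mul_self_sqrt] <;> norm_num
    rw [← mul_inv, h]
  have hconjsign : ∀ (W : Type _) (t : W → Bool) (e : Sym2 W),
      starRingEnd ℂ (edgeSign t e) = edgeSign t e := by
    intro W t e
    induction e using Sym2.ind with
    | _ u v =>
      show starRingEnd ℂ (if t u && t v then (-1 : ℂ) else 1) =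
        (if t u && t v then (-1 : ℂ) else 1)
      simp [apply_ite (starRingEnd ℂ)]
  have hconjT : ∀ t : {v : V // v ≠ a} → Bool,
      starRingEnd ℂ (∏ e ∈ (inducedSub G (· ≠ a)).edgeFinset, edgeSign t e) =
        ∏ e ∈ (inducedSub G (· ≠ a)).edgeFinset, edgeSign t e := by
    intro t
    rw [map_prod]
    exact Finset.prod_congr rfl fun e _ => hconjsign _ t e
  have hconjP : ∀ t : {v : V // v ≠ a} → Bool,
      starRingEnd ℂ (∏ c ∈ Finset.univ.filter (fun c : {v : V // v ≠ a} => G.Adj a c.1),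
          if t c then (-1 : ℂ) else 1) =
        ∏ c ∈ Finset.univ.filter (fun c : {v : V // v ≠ a} => G.Adj a c.1),
          if t c then (-1 : ℂ) else 1 := by
    intro t
    rw [map_prod]
    exact Finset.prod_congr rfl fun c _ => by simp [apply_ite (starRingEnd ℂ)]
  have hL : ptraceKeep (· ≠ a) (outer (graphState G) (graphState G)) x y
      = ∑ b : Bool, graphState G (mg a x b) * starRingEnd ℂ (graphState G (mg a y b)) := by
    simp only [ptraceKeep, outer]
    refine Finset.sum_nbij' (i := fun z => eqv a z) (j := fun b => (eqv a).symm b)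
      (fun z _ => by simp) (fun b _ => by simp)
      (fun z _ => (eqv a).left_inv z) (fun b _ => (eqv a).right_inv b) (fun z _ => ?_)
    have hx : (fun w => if h : w ≠ a then x ⟨w, h⟩ else z ⟨w, h⟩) = mg a x (eqv a z) := by
      funext w
      by_cases h : w = a
      · subst h; simp [mg, eqv]
      · simp [mg, h, eqv]
    have hy : (fun w => if h : w ≠ a then y ⟨w, h⟩ else z ⟨w, h⟩) = mg a y (eqv a z) := by
      funext w
      by_cases h : w = a
      · subst h; simp [mg, eqv]
      · simp [mg, h, eqv]
    rw [hx, hy]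
  have hg : ∀ t : {v : V // v ≠ a} → Bool,
      graphState (inducedSub G (· ≠ a)) t =
        (((Real.sqrt 2 : ℝ) : ℂ))⁻¹ ^ (Fintype.card {v : V // v ≠ a}) *
          ∏ e ∈ (inducedSub G (· ≠ a)).edgeFinset, edgeSign t e := fun t => rfl
  simp only [Pi.add_apply, Pi.smul_apply, smul_eq_mul, outer, pauliZProd]
  rw [hL, Fintype.sum_bool, graphState_mg G a x true, graphState_mg G a x false,
    graphState_mg G a y true, graphState_mg G a y false, hg x, hg y]
  simp only [Bool.true_and, Bool.false_and, Bool.false_eq_true, if_false,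
    Finset.prod_const_one, map_mul, map_pow, map_inv₀, map_one, Complex.conj_ofReal,
    hconjT, hconjP]
  have hpow : (((Real.sqrt 2 : ℝ) : ℂ))⁻¹ ^ (Fintype.card {v : V // v ≠ a} + 1) *
      (((Real.sqrt 2 : ℝ) : ℂ))⁻¹ ^ (Fintype.card {v : V // v ≠ a} + 1) =
      2⁻¹ * ((((Real.sqrt 2 : ℝ) : ℂ))⁻¹ ^ (Fintype.card {v : V // v ≠ a}) *
        (((Real.sqrt 2 : ℝ) : ℂ))⁻¹ ^ (Fintype.card {v : V // v ≠ a})) := by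
    rw [pow_succ]
    linear_combination ((((Real.sqrt 2 : ℝ) : ℂ))⁻¹ ^ (Fintype.card {v : V // v ≠ a}) *
      (((Real.sqrt 2 : ℝ) : ℂ))⁻¹ ^ (Fintype.card {v : V // v ≠ a})) * hr2
  generalize hTx : (∏ e ∈ (inducedSub G (· ≠ a)).edgeFinset, edgeSign x e) = Tx at *
  generalize hTy : (∏ e ∈ (inducedSub G (· ≠ a)).edgeFinset, edgeSign y e) = Ty at *
  generalize hPx : (∏ c ∈ Finset.univ.filter (fun c : {v : V // v ≠ a} => G.Adj a c.1),
      if x c then (-1 : ℂ) else 1) = Px at *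
  generalize hPy : (∏ c ∈ Finset.univ.filter (fun c : {v : V // v ≠ a} => G.Adj a c.1),
      if y c then (-1 : ℂ) else 1) = Py at *
  linear_combination (Px * Py + 1) * Tx * Ty * hpow
end
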